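/- Let n ≥ 1 and let ℓ be a function from finite binary strings to the even natural numbers satisfying: (i) ℓ(∅) = 2n; (ii) for every string σ, 2ℓ(σ) − 4 ≤ ℓ(σ0) + ℓ(σ1); (iii) there exists D such that ℓ(σ) = 0 whenever |σ| ≥ D. Call a string σ 'final-2k' if ℓ(σ) = 2k and ℓ(τ) < 2k for every proper descendant τ of σ. Then for every integer k with 1 ≤ k ≤ n, there are at least 2^{n−k} final-2k strings. -/

import Mathlib

lemma prefix_getElem {σ τ : List Bool} (b : Bool) (h : σ ++ [b] <+: τ) :
    τ[σ.length]? = some b := by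
  obtain ⟨t, rfl⟩ := h
  simp [List.getElem_append_right]

lemma bing_aux (k : ℕ) (hk : 1 ≤ k) (ℓ : List Bool → ℕ)
    (heven : ∀ σ : List Bool, Even (ℓ σ))
    (hfork : ∀ σ : List Bool, 2 * ℓ σ ≤ ℓ (σ ++ [false]) + ℓ (σ ++ [true]) + 4)
    (D : ℕ) (hD : ∀ σ : List Bool, D ≤ σ.length → ℓ σ = 0) :
    ∀ d : ℕ, ∀ σ : List Bool, D ≤ σ.length + d → ∀ j : ℕ, k ≤ j → ℓ σ = 2 * j →
      2 ^ (j - k) ≤ Set.ncard {τ : List Bool | σ <+: τ ∧ ℓ τ = 2 * k ∧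
        ∀ ρ : List Bool, τ <+: ρ → τ ≠ ρ → ℓ ρ < 2 * k} := by
  -- finiteness of all relevant sets
  have hfin : ∀ σ : List Bool, Set.Finite {τ : List Bool | σ <+: τ ∧ ℓ τ = 2 * k ∧
      ∀ ρ : List Bool, τ <+: ρ → τ ≠ ρ → ℓ ρ < 2 * k} := by
    intro σ
    apply (List.finite_length_lt Bool D).subset
    intro τ hτ
    simp only [Set.mem_setOf_eq] at hτ ⊢
    rcases Nat.lt_or_ge τ.length D with h | h
    · exact h
    · exact absurd (hD τ h) (by omega)
  intro d
  induction d using Nat.strong_induction_on with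
  | _ d ih =>
    intro σ hlen j hkj hσ
    have hσD : σ.length < D := by
      by_contra h
      have := hD σ (by omega)
      omega
    -- case split: is there a child with value ≥ ℓ σ?
    by_cases hchild : ℓ (σ ++ [false]) < ℓ σ ∧ ℓ (σ ++ [true]) < ℓ σ
    · -- both children equal 2j - 2
      have hf := hfork σ
      obtain ⟨a, ha⟩ := heven (σ ++ [false])
      obtain ⟨b, hb⟩ := heven (σ ++ [true])
      have h0 : ℓ (σ ++ [false]) = 2 * j - 2 := by omega
      have h1 : ℓ (σ ++ [true]) = 2 * j - 2 := by omega
      rcases Nat.lt_or_ge k j with hlt | hge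
      · -- j > k: use both children
        have hlen' : ∀ b : Bool, D ≤ (σ ++ [b]).length + (d - 1) := by
          intro b; simp; omega
        have H0 := ih (d - 1) (by omega) (σ ++ [false]) (hlen' false) (j - 1)
          (by omega) (by omega)
        have H1 := ih (d - 1) (by omega) (σ ++ [true]) (hlen' true) (j - 1)
          (by omega) (by omega)
        set S0 := {τ : List Bool | σ ++ [false] <+: τ ∧ ℓ τ = 2 * k ∧
          ∀ ρ : List Bool, τ <+: ρ → τ ≠ ρ → ℓ ρ < 2 * k}
        set S1 := {τ : List Bool | σ ++ [true] <+: τ ∧ ℓ τ = 2 * k ∧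
          ∀ ρ : List Bool, τ <+: ρ → τ ≠ ρ → ℓ ρ < 2 * k}
        have hdisj : Disjoint S0 S1 := by
          rw [Set.disjoint_left]
          rintro τ ⟨h0, -⟩ ⟨h1, -⟩
          have := prefix_getElem false h0
          have := prefix_getElem true h1
          simp_all
        have hsub : S0 ∪ S1 ⊆ {τ : List Bool | σ <+: τ ∧ ℓ τ = 2 * k ∧
            ∀ ρ : List Bool, τ <+: ρ → τ ≠ ρ → ℓ ρ < 2 * k} := by
          rintro τ (⟨h, h'⟩ | ⟨h, h'⟩) <;>
            exact ⟨((σ.prefix_append _).trans h), h'⟩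
        calc 2 ^ (j - k) = 2 ^ (j - 1 - k) + 2 ^ (j - 1 - k) := by
              rw [← two_mul, ← pow_succ']
              congr 1
              omega
          _ ≤ S0.ncard + S1.ncard := Nat.add_le_add H0 H1
          _ = (S0 ∪ S1).ncard := (Set.ncard_union_eq hdisj (hfin _) (hfin _)).symm
          _ ≤ _ := Set.ncard_le_ncard hsub (hfin _)
      · -- j = k
        have hjk : j = k := le_antisymm hge hkj
        subst hjk
        suffices hne : Set.Nonempty {τ : List Bool | σ <+: τ ∧ ℓ τ = 2 * j ∧
            ∀ ρ : List Bool, τ <+: ρ → τ ≠ ρ → ℓ ρ < 2 * j} by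
          have hpos := (Set.ncard_pos (hfin σ)).mpr hne
          simp only [Nat.sub_self, pow_zero]
          exact hpos
        by_cases hex : ∃ τ : List Bool, σ <+: τ ∧ σ ≠ τ ∧ 2 * j ≤ ℓ τ
        · obtain ⟨τ, hpre, hne, hge2⟩ := hex
          have hτlt : τ.length < D := by
            by_contra h
            have := hD τ (by omega)
            omega
          have hlt : σ.length < τ.length := by
            rcases Nat.lt_or_ge σ.length τ.length with h | h
            · exact h
            · exact absurd (List.IsPrefix.eq_of_length_le hpre h) hne
          obtain ⟨j', hj'⟩ := heven τ
          have H := ih (d - (τ.length - σ.length)) (by omega) τ (by omega) j'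
            (by omega) (by omega)
          have : 0 < 2 ^ (j' - j) := Nat.pow_pos (by norm_num)
          have hne2 : {ρ : List Bool | τ <+: ρ ∧ ℓ ρ = 2 * j ∧
              ∀ π : List Bool, ρ <+: π → ρ ≠ π → ℓ π < 2 * j}.Nonempty :=
            Set.nonempty_of_ncard_ne_zero (by omega)
          obtain ⟨ρ, h1, h2, h3⟩ := hne2
          exact ⟨ρ, hpre.trans h1, h2, h3⟩
        · push_neg at hex
          exact ⟨σ, List.prefix_refl σ, hσ, fun ρ h1 h2 => hex ρ h1 h2⟩
    · -- some child has value ≥ ℓ σ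
      push_neg at hchild
      have : ∃ c : List Bool, σ <+: c ∧ c.length = σ.length + 1 ∧ ℓ σ ≤ ℓ c := by
        rcases Nat.lt_or_ge (ℓ (σ ++ [false])) (ℓ σ) with h | h
        · exact ⟨σ ++ [true], σ.prefix_append _, by simp, hchild h⟩
        · exact ⟨σ ++ [false], σ.prefix_append _, by simp, h⟩
      obtain ⟨c, hc1, hc2, hc3⟩ := this
      obtain ⟨j', hj'⟩ := heven c
      have H := ih (d - 1) (by omega) c (by omega) j' (by omega) (by omega)
      calc 2 ^ (j - k) ≤ 2 ^ (j' - k) := Nat.pow_le_pow_right (by norm_num) (by omega)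
        _ ≤ _ := H
        _ ≤ _ := Set.ncard_le_ncard
            (by rintro τ ⟨h, h'⟩; exact ⟨hc1.trans h, h'⟩) (hfin _)


/-- Counting final-`2k` vertices in the Bing tree: if an even-valued length
function on the complete binary tree has root value `2n`, satisfies Bing's
fork inequality `2ℓ(σ) - 4 ≤ ℓ(σ0) + ℓ(σ1)`, and vanishes at sufficient depth,
then for every `1 ≤ k ≤ n` there are at least `2^(n-k)` strings `σ` with
`ℓ(σ) = 2k` and `ℓ(τ) < 2k` for every proper descendant `τ` of `σ`. -/
theorem final_2k_count (n : ℕ) (hn : 1 ≤ n) (ℓ : List Bool → ℕ)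
    (heven : ∀ σ : List Bool, Even (ℓ σ))
    (hroot : ℓ [] = 2 * n)
    (hfork : ∀ σ : List Bool, 2 * ℓ σ ≤ ℓ (σ ++ [false]) + ℓ (σ ++ [true]) + 4)
    (hshrink : ∃ D : ℕ, ∀ σ : List Bool, D ≤ σ.length → ℓ σ = 0) :
    ∀ k : ℕ, 1 ≤ k → k ≤ n →
      2 ^ (n - k) ≤ Set.ncard {σ : List Bool |
        ℓ σ = 2 * k ∧ ∀ τ : List Bool, σ <+: τ → σ ≠ τ → ℓ τ < 2 * k} := by
  intro k hk hkn
  obtain ⟨D, hD⟩ := hshrink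
  have H := bing_aux k hk ℓ heven hfork D hD D [] (by simp) n hkn hroot
  have hset : {τ : List Bool | [] <+: τ ∧ ℓ τ = 2 * k ∧
      ∀ ρ : List Bool, τ <+: ρ → τ ≠ ρ → ℓ ρ < 2 * k} =
      {σ : List Bool | ℓ σ = 2 * k ∧ ∀ τ : List Bool, σ <+: τ → σ ≠ τ → ℓ τ < 2 * k} := by
    ext τ
    simp [List.nil_prefix]
  rwa [hset] at H
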